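/- (Symbol estimate for T(δ) = (1 − δ²∂_x²)⁻¹ − 1.) For every η ≥ 0 and every δ₀ > 0 there exists a constant C > 0 such that for all real δ with |δ| ≤ δ₀ and δ²η² ≤ 1/2, and all k ∈ ℝ: |δ²(ik − η)²| ≤ C·|δ|·√(1 + k²)·|1 − δ²(ik − η)²|; equivalently, the symbol δ²(ik − η)²/(1 − δ²(ik − η)²) of the conjugated operator T_η(δ) is bounded in modulus by C|δ|·√(1 + k²). -/

import Mathlib

theorem stmt7 (η : ℝ) (hη : 0 ≤ η) (δ₀ : ℝ) (hδ₀ : 0 < δ₀) :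
    ∃ C > (0 : ℝ), ∀ δ : ℝ, |δ| ≤ δ₀ → δ ^ 2 * η ^ 2 ≤ 1 / 2 → ∀ k : ℝ,
      ‖(δ : ℂ) ^ 2 * (Complex.I * (k : ℂ) - (η : ℂ)) ^ 2‖
        ≤ C * |δ| * Real.sqrt (1 + k ^ 2) *
            ‖1 - (δ : ℂ) ^ 2 * (Complex.I * (k : ℂ) - (η : ℂ)) ^ 2‖ := by
  refine ⟨2 * δ₀ * η ^ 2 + 2, by positivity, ?_⟩
  intro δ hδ h2 k
  set w : ℂ := Complex.I * (k : ℂ) - (η : ℂ) with hw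
  -- LHS value
  have hls : ‖(δ : ℂ) ^ 2 * w ^ 2‖ = δ ^ 2 * (η ^ 2 + k ^ 2) := by
    rw [norm_mul, norm_pow, norm_pow, Complex.norm_real, Real.norm_eq_abs]
    rw [Complex.sq_norm w, Complex.normSq_apply]
    have h1 : w.re = -η := by simp [hw]
    have h2 : w.im = k := by simp [hw]
    rw [h1, h2]
    rw [sq_abs]
    ring
  -- lower bound on |1 - δ² w²|
  have hre : (1 - (δ : ℂ) ^ 2 * w ^ 2).re = 1 - δ ^ 2 * η ^ 2 + δ ^ 2 * k ^ 2 := by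
    have h1 : w.re = -η := by simp [hw]
    have h2 : w.im = k := by simp [hw]
    simp [Complex.sub_re, Complex.mul_re, Complex.mul_im, pow_two, h1, h2]
    ring
  have hlb : 1 / 2 + δ ^ 2 * k ^ 2 ≤ ‖1 - (δ : ℂ) ^ 2 * w ^ 2‖ := by
    calc 1 / 2 + δ ^ 2 * k ^ 2 ≤ (1 - (δ : ℂ) ^ 2 * w ^ 2).re := by
          rw [hre]; linarith
      _ ≤ ‖1 - (δ : ℂ) ^ 2 * w ^ 2‖ := Complex.re_le_norm _
  -- real side
  set s := Real.sqrt (1 + k ^ 2) with hs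
  have hs1 : 1 ≤ s := by
    rw [hs]
    have : (1 : ℝ) = Real.sqrt 1 := by simp
    rw [this]
    exact Real.sqrt_le_sqrt (by nlinarith [sq_nonneg k])
  have hsk : |k| ≤ s := by
    rw [hs]
    have : |k| = Real.sqrt (k ^ 2) := (Real.sqrt_sq_eq_abs k).symm
    rw [this]
    exact Real.sqrt_le_sqrt (by linarith)
  have hd0 : (0 : ℝ) ≤ |δ| := abs_nonneg δ
  have hdsq : δ ^ 2 = |δ| ^ 2 := (sq_abs δ).symm
  have hksq : k ^ 2 = |k| ^ 2 := (sq_abs k).symm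
  have hk0 : (0 : ℝ) ≤ |k| := abs_nonneg k
  have key : δ ^ 2 * (η ^ 2 + k ^ 2)
      ≤ (2 * δ₀ * η ^ 2 + 2) * |δ| * s * (1 / 2 + δ ^ 2 * k ^ 2) := by
    have h1 : δ ^ 2 * η ^ 2 ≤ (2 * δ₀ * η ^ 2) * |δ| * s * (1 / 2 + δ ^ 2 * k ^ 2) := by
      have hA : (1 : ℝ) / 2 ≤ s * (1 / 2 + δ ^ 2 * k ^ 2) := by nlinarith [sq_nonneg (δ * k)]
      have hB := mul_le_mul_of_nonneg_left hA
        (by positivity : (0 : ℝ) ≤ 2 * δ₀ * η ^ 2 * |δ|)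
      have hCc := mul_le_mul_of_nonneg_right hδ (mul_nonneg hd0 (sq_nonneg η))
      nlinarith [hB, hCc]
    have h2' : δ ^ 2 * k ^ 2 ≤ 2 * |δ| * s * (1 / 2 + δ ^ 2 * k ^ 2) := by
      have ha : |δ| * |k| ≤ |δ| * s := mul_le_mul_of_nonneg_left hsk hd0
      nlinarith [mul_nonneg hd0 hk0, sq_nonneg (|δ| * |k| - 1), sq_nonneg (|δ| * |k|),
        mul_nonneg (mul_nonneg hd0 hk0) (sq_nonneg (|δ| * |k|)),
        mul_le_mul_of_nonneg_right ha (sq_nonneg (δ * k))]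
    nlinarith [h1, h2']
  have hC : (0 : ℝ) ≤ (2 * δ₀ * η ^ 2 + 2) * |δ| * s := by positivity
  calc ‖(δ : ℂ) ^ 2 * w ^ 2‖ = δ ^ 2 * (η ^ 2 + k ^ 2) := hls
    _ ≤ (2 * δ₀ * η ^ 2 + 2) * |δ| * s * (1 / 2 + δ ^ 2 * k ^ 2) := key
    _ ≤ (2 * δ₀ * η ^ 2 + 2) * |δ| * s * ‖1 - (δ : ℂ) ^ 2 * w ^ 2‖ :=
        mul_le_mul_of_nonneg_left hlb hC
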